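/- Let (S_G, M_G) be a quantum graph on M_n(ℂ) and (S_H, M_H) a quantum graph on M_m(ℂ). Set M_K = M_G ⊗ M_H (the unital star-subalgebra of M_{nm}(ℂ) spanned by Kronecker products of elements of M_G and M_H) and S_K = S_G ⊗ M_H' + M_G' ⊗ S_H + S_G ⊗ S_H (strong product). Then (S_K, M_K) is a quantum graph on M_{nm}(ℂ): S_K is a ℂ-linear subspace closed under conjugate transpose, A X B ∈ S_K for all A, B in the commutant M_K' of M_K in M_{nm}(ℂ) and all X ∈ S_K, and Tr(X Aᴴ) = 0 for all X ∈ S_K and A ∈ M_K'. -/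

import Mathlib

open Matrix Kronecker BigOperators

noncomputable section

/-- The commutant of a set of matrices in `M_I(ℂ)`. -/
def commutant {I : Type*} [Fintype I] (M : Set (Matrix I I ℂ)) : Set (Matrix I I ℂ) :=
  {Y | ∀ A ∈ M, Y * A = A * Y}

/-- The ℂ-linear span of Kronecker products `v ⊗ₖ w` with `v ∈ V`, `w ∈ W`. -/
def tensorSpan {I J : Type*} [Fintype I] [Fintype J]
    (V : Set (Matrix I I ℂ)) (W : Set (Matrix J J ℂ)) :
    Submodule ℂ (Matrix (I × J) (I × J) ℂ) :=
  Submodule.span ℂ {x | ∃ v ∈ V, ∃ w ∈ W, x = v ⊗ₖ w}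

/-- A pair `(S, M)` is a quantum graph: `S` is closed under conjugate transpose, is a
bimodule over the commutant of `M`, and is trace-orthogonal to the commutant of `M`. -/
def IsQuantumGraph {I : Type*} [Fintype I]
    (S : Submodule ℂ (Matrix I I ℂ)) (M : Set (Matrix I I ℂ)) : Prop :=
  (∀ X ∈ S, Xᴴ ∈ S) ∧
  (∀ A ∈ commutant M, ∀ B ∈ commutant M, ∀ X ∈ S, A * X * B ∈ S) ∧
  (∀ X ∈ S, ∀ A ∈ commutant M, Matrix.trace (X * Aᴴ) = 0)

/-- Product of the matrices `P a`, `a ∈ T`, taken in increasing order of indices. -/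
def finsetProd {β : Type*} [Monoid β] {c : ℕ} (P : Fin c → β) (T : Finset (Fin c)) : β :=
  ((T.sort (· ≤ ·)).map P).prod

/-- A quantum `c`-coloring of `(S, M)` (with auxiliary algebra `M_k(ℂ)`). -/
def IsQColoring {I : Type*} [Fintype I] [DecidableEq I] {c k : ℕ}
    (S : Submodule ℂ (Matrix I I ℂ)) (M : Set (Matrix I I ℂ))
    (P : Fin c → Matrix (I × Fin k) (I × Fin k) ℂ) : Prop :=
  (∀ a, P a ∈ tensorSpan M (Set.univ : Set (Matrix (Fin k) (Fin k) ℂ))) ∧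
  (∀ a, (P a)ᴴ = P a) ∧
  (∀ a, P a * P a = P a) ∧
  ((∑ a, P a) = 1) ∧
  (∀ X ∈ S, ∀ a, P a * (X ⊗ₖ (1 : Matrix (Fin k) (Fin k) ℂ)) * P a = 0)

def HasQColoring {I : Type*} [Fintype I] [DecidableEq I]
    (S : Submodule ℂ (Matrix I I ℂ)) (M : Set (Matrix I I ℂ)) (c : ℕ) : Prop :=
  ∃ k : ℕ, 1 ≤ k ∧ ∃ P : Fin c → Matrix (I × Fin k) (I × Fin k) ℂ, IsQColoring S M P

/-- The quantum chromatic number `χ_q(S, M) ∈ ℕ∞`. -/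
def qChrom {I : Type*} [Fintype I] [DecidableEq I]
    (S : Submodule ℂ (Matrix I I ℂ)) (M : Set (Matrix I I ℂ)) : ℕ∞ :=
  ⨅ (c : ℕ) (_ : HasQColoring S M c), (c : ℕ∞)

/-- A quantum `b`-fold coloring of `(S, M)` using `c` colors
(with auxiliary algebra `M_k(ℂ)`). -/
def IsQBFoldColoring {I : Type*} [Fintype I] [DecidableEq I] {c k : ℕ}
    (S : Submodule ℂ (Matrix I I ℂ)) (M : Set (Matrix I I ℂ)) (b : ℕ)
    (P : Fin c → Matrix (I × Fin k) (I × Fin k) ℂ) : Prop :=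
  (∀ a, P a ∈ tensorSpan M (Set.univ : Set (Matrix (Fin k) (Fin k) ℂ))) ∧
  (∀ a a', P a * P a' = P a' * P a) ∧
  (∀ a, (P a)ᴴ = P a) ∧
  (∀ a, P a * P a = P a) ∧
  ((∑ T ∈ Finset.univ.powersetCard b, finsetProd P T) = 1) ∧
  (∀ X ∈ S, ∀ a, P a * (X ⊗ₖ (1 : Matrix (Fin k) (Fin k) ℂ)) * P a = 0)

def HasQBFoldColoring {I : Type*} [Fintype I] [DecidableEq I]
    (S : Submodule ℂ (Matrix I I ℂ)) (M : Set (Matrix I I ℂ)) (b c : ℕ) : Prop :=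
  ∃ k : ℕ, 1 ≤ k ∧ ∃ P : Fin c → Matrix (I × Fin k) (I × Fin k) ℂ, IsQBFoldColoring S M b P

/-- The quantum `b`-fold chromatic number `χ_{b,q}(S, M) ∈ ℕ∞`. -/
def qbChrom {I : Type*} [Fintype I] [DecidableEq I]
    (S : Submodule ℂ (Matrix I I ℂ)) (M : Set (Matrix I I ℂ)) (b : ℕ) : ℕ∞ :=
  ⨅ (c : ℕ) (_ : HasQBFoldColoring S M b c), (c : ℕ∞)

/-- A local `b`-fold coloring of `(S, M)` using `c` colors (projections in `M` itself). -/
def IsLocalBFoldColoring {I : Type*} [Fintype I] [DecidableEq I] {c : ℕ}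
    (S : Submodule ℂ (Matrix I I ℂ)) (M : Set (Matrix I I ℂ)) (b : ℕ)
    (P : Fin c → Matrix I I ℂ) : Prop :=
  (∀ a, P a ∈ M) ∧
  (∀ a a', P a * P a' = P a' * P a) ∧
  (∀ a, (P a)ᴴ = P a) ∧
  (∀ a, P a * P a = P a) ∧
  ((∑ T ∈ Finset.univ.powersetCard b, finsetProd P T) = 1) ∧
  (∀ X ∈ S, ∀ a, P a * X * P a = 0)

def HasLocalBFoldColoring {I : Type*} [Fintype I] [DecidableEq I]
    (S : Submodule ℂ (Matrix I I ℂ)) (M : Set (Matrix I I ℂ)) (b c : ℕ) : Prop :=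
  ∃ P : Fin c → Matrix I I ℂ, IsLocalBFoldColoring S M b P

/-- The local `b`-fold chromatic number. -/
def localBChrom {I : Type*} [Fintype I] [DecidableEq I]
    (S : Submodule ℂ (Matrix I I ℂ)) (M : Set (Matrix I I ℂ)) (b : ℕ) : ℕ∞ :=
  ⨅ (c : ℕ) (_ : HasLocalBFoldColoring S M b c), (c : ℕ∞)

/-- `S_G`: span of matrix units on edges of a simple graph. -/
def graphSpan {V : Type*} [Fintype V] [DecidableEq V] (G : SimpleGraph V) :
    Submodule ℂ (Matrix V V ℂ) :=
  Submodule.span ℂ {x | ∃ v w, G.Adj v w ∧ x = Matrix.single v w 1}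

/-- The partial trace over the first tensor factor. -/
def ptrace {I J : Type*} [Fintype I] (P : Matrix (I × J) (I × J) ℂ) : Matrix J J ℂ :=
  Matrix.of fun p q => ∑ i, P (i, p) (i, q)

/-- The complete quantum graph operator space: everything trace-orthogonal to `M'`. -/
def completeS {I : Type*} [Fintype I] (M : Set (Matrix I I ℂ)) :
    Submodule ℂ (Matrix I I ℂ) where
  carrier := {X | ∀ A ∈ commutant M, Matrix.trace (X * Aᴴ) = 0}
  add_mem' := by
    intro x y hx hy A hA
    rw [Set.mem_setOf_eq] at *
    rw [Matrix.add_mul, Matrix.trace_add, hx A hA, hy A hA, add_zero]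
  zero_mem' := by
    intro A hA
    rw [Matrix.zero_mul, Matrix.trace_zero]
  smul_mem' := by
    intro r x hx A hA
    rw [Set.mem_setOf_eq] at *
    rw [Matrix.smul_mul, Matrix.trace_smul, hx A hA, smul_zero]

section QGAux
set_option linter.unusedSectionVars false

variable {I J : Type*} [Fintype I] [Fintype J] [DecidableEq I] [DecidableEq J]

lemma commutant_mul' {M : Set (Matrix I I ℂ)} {a b : Matrix I I ℂ}
    (ha : a ∈ commutant M) (hb : b ∈ commutant M) : a * b ∈ commutant M := by
  intro A hA
  rw [mul_assoc, hb A hA, ← mul_assoc, ha A hA, mul_assoc]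

lemma commutant_star' {M : Set (Matrix I I ℂ)} (hM : ∀ A ∈ M, Aᴴ ∈ M)
    {a : Matrix I I ℂ} (ha : a ∈ commutant M) : aᴴ ∈ commutant M := by
  intro A hA
  have h := ha Aᴴ (hM A hA)
  calc aᴴ * A = (Aᴴ * a)ᴴ := by simp
    _ = (a * Aᴴ)ᴴ := by rw [h]
    _ = A * aᴴ := by simp

def commSub (M : Set (Matrix I I ℂ)) : Submodule ℂ (Matrix I I ℂ) where
  carrier := commutant M
  add_mem' := by
    intro a b ha hb A hA
    rw [add_mul, mul_add, ha A hA, hb A hA]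
  zero_mem' := by intro A hA; simp
  smul_mem' := by
    intro c x hx A hA
    rw [smul_mul_assoc, mul_smul_comm, hx A hA]

lemma exists_proj {V : Type*} [AddCommGroup V] [Module ℂ V] (p : Submodule ℂ V) :
    ∃ π : V →ₗ[ℂ] V, (∀ x, π x ∈ p) ∧ ∀ x ∈ p, π x = x := by
  obtain ⟨q, hq⟩ := Submodule.exists_isCompl p
  refine ⟨p.subtype ∘ₗ p.linearProjOfIsCompl q hq, fun x => ?_, fun x hx => ?_⟩
  · exact (p.linearProjOfIsCompl q hq x).2
  · exact congrArg Subtype.val (Submodule.projectionOnto_apply_left hq ⟨x, hx⟩)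

lemma proj_entry_expand (π : Matrix J J ℂ →ₗ[ℂ] Matrix J J ℂ) (Z : Matrix J J ℂ) (b d : J) :
    π Z b d = ∑ p, ∑ q, Z p q * (π (single p q 1)) b d := by
  conv_lhs => rw [matrix_eq_sum_single Z]
  rw [map_sum]
  simp only [map_sum, Matrix.sum_apply]
  congr 1; ext p; congr 1; ext q
  have h : single p q (Z p q) = Z p q • single p q 1 := by
    rw [smul_single, smul_eq_mul, mul_one]
  rw [h, _root_.map_smul]
  simp

lemma kron_conjTranspose' (v : Matrix I I ℂ) (w : Matrix J J ℂ) :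
    (v ⊗ₖ w)ᴴ = vᴴ ⊗ₖ wᴴ := by
  ext ⟨i, p⟩ ⟨j, q⟩
  simp [conjTranspose_apply, kroneckerMap_apply, mul_comm]

lemma commutant_tensorSpan_subset (MG : Set (Matrix I I ℂ)) (MH : Set (Matrix J J ℂ))
    (h1G : (1 : Matrix I I ℂ) ∈ MG) (h1H : (1 : Matrix J J ℂ) ∈ MH)
    {Y : Matrix (I × J) (I × J) ℂ}
    (hY : Y ∈ commutant ((tensorSpan MG MH : Submodule ℂ _) : Set (Matrix (I × J) (I × J) ℂ))) :
    Y ∈ tensorSpan (commutant MG) (commutant MH) := by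
  obtain ⟨πG, hπG1, hπG2⟩ := exists_proj (commSub (I := I) MG)
  obtain ⟨πH, hπH1, hπH2⟩ := exists_proj (commSub (I := J) MH)
  have hZ : ∀ i j : I, (Matrix.of fun p q => Y (i, p) (j, q)) ∈ commutant MH := by
    intro i j B hB
    have hmem : (1 : Matrix I I ℂ) ⊗ₖ B ∈ (tensorSpan MG MH : Submodule ℂ _) :=
      Submodule.subset_span ⟨1, h1G, B, hB, rfl⟩
    have h := hY ((1 : Matrix I I ℂ) ⊗ₖ B) hmem
    ext p q
    have h1 := congrFun (congrFun h (i, p)) (j, q)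
    simp only [Matrix.mul_apply, kroneckerMap_apply, Matrix.one_apply, Fintype.sum_prod_type,
      ite_mul, one_mul, zero_mul, mul_ite, mul_one, mul_zero, Finset.sum_ite_eq,
      Finset.sum_ite_eq', Finset.mem_univ, if_true] at h1
    simpa [Matrix.mul_apply] using h1
  have hW : ∀ b d : J, (Matrix.of fun i j => Y (i, b) (j, d)) ∈ commutant MG := by
    intro b d A hA
    have hmem : A ⊗ₖ (1 : Matrix J J ℂ) ∈ (tensorSpan MG MH : Submodule ℂ _) :=
      Submodule.subset_span ⟨A, hA, 1, h1H, rfl⟩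
    have h := hY (A ⊗ₖ (1 : Matrix J J ℂ)) hmem
    ext a c
    have h1 := congrFun (congrFun h (a, b)) (c, d)
    simp only [Matrix.mul_apply, kroneckerMap_apply, Matrix.one_apply, Fintype.sum_prod_type,
      ite_mul, one_mul, zero_mul, mul_ite, mul_one, mul_zero, Finset.sum_ite_eq,
      Finset.sum_ite_eq', Finset.mem_univ, if_true] at h1
    simpa [Matrix.mul_apply] using h1
  have key : Y = ∑ i, ∑ j, ∑ p, ∑ q,
      Y (i, p) (j, q) • ((πG (single i j 1)) ⊗ₖ (πH (single p q 1))) := by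
    ext ⟨a, b⟩ ⟨c, d⟩
    simp only [Matrix.sum_apply, Matrix.smul_apply, kroneckerMap_apply, smul_eq_mul]
    symm
    have step1 : ∀ i j : I,
        ∑ p, ∑ q, Y (i, p) (j, q) * (πH (single p q 1)) b d = Y (i, b) (j, d) := by
      intro i j
      have h2 : πH (Matrix.of fun p q => Y (i, p) (j, q)) = Matrix.of fun p q => Y (i, p) (j, q) :=
        hπH2 _ (hZ i j)
      have h3 := proj_entry_expand πH (Matrix.of fun p q => Y (i, p) (j, q)) b d
      rw [h2] at h3
      simpa using h3.symm
    calc ∑ i, ∑ j, ∑ p, ∑ q,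
          Y (i, p) (j, q) * ((πG (single i j 1)) a c * (πH (single p q 1)) b d)
        = ∑ i, ∑ j, (Matrix.of fun i j => Y (i, b) (j, d)) i j * (πG (single i j 1)) a c := by
          congr 1; ext i; congr 1; ext j
          rw [Matrix.of_apply, ← step1 i j, Finset.sum_mul]
          congr 1; ext p
          rw [Finset.sum_mul]
          congr 1; ext q
          ring
      _ = (πG (Matrix.of fun i j => Y (i, b) (j, d))) a c := (proj_entry_expand πG _ a c).symm
      _ = Y (a, b) (c, d) := by rw [hπG2 _ (hW b d)]; rfl
  rw [key]
  refine Submodule.sum_mem _ fun i _ => Submodule.sum_mem _ fun j _ =>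
    Submodule.sum_mem _ fun p _ => Submodule.sum_mem _ fun q _ =>
    Submodule.smul_mem _ _ (Submodule.subset_span ⟨_, hπG1 _, _, hπH1 _, rfl⟩)

lemma mul_tensor_mul_mem {CG : Set (Matrix I I ℂ)} {CH : Set (Matrix J J ℂ)}
    (VG : Set (Matrix I I ℂ)) (VH : Set (Matrix J J ℂ))
    (hVG : ∀ a ∈ CG, ∀ b ∈ CG, ∀ v ∈ VG, a * v * b ∈ VG)
    (hVH : ∀ a ∈ CH, ∀ b ∈ CH, ∀ w ∈ VH, a * w * b ∈ VH)
    {A B : Matrix (I × J) (I × J) ℂ} (hA : A ∈ tensorSpan CG CH) (hB : B ∈ tensorSpan CG CH)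
    {v : Matrix I I ℂ} {w : Matrix J J ℂ} (hv : v ∈ VG) (hw : w ∈ VH) :
    A * (v ⊗ₖ w) * B ∈ tensorSpan VG VH := by
  induction hA using Submodule.span_induction with
  | mem a ha =>
    induction hB using Submodule.span_induction with
    | mem b hb =>
      obtain ⟨a1, ha1, a2, ha2, rfl⟩ := ha
      obtain ⟨b1, hb1, b2, hb2, rfl⟩ := hb
      rw [← Matrix.mul_kronecker_mul, ← Matrix.mul_kronecker_mul]
      exact Submodule.subset_span ⟨_, hVG _ ha1 _ hb1 _ hv, _, hVH _ ha2 _ hb2 _ hw, rfl⟩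
    | zero => rw [mul_zero]; exact zero_mem _
    | add x y _ _ hx hy => rw [mul_add]; exact add_mem hx hy
    | smul c x _ hx => rw [mul_smul_comm]; exact Submodule.smul_mem _ _ hx
  | zero => rw [zero_mul, zero_mul]; exact zero_mem _
  | add x y _ _ hx hy => rw [add_mul, add_mul]; exact add_mem hx hy
  | smul c x _ hx => rw [smul_mul_assoc, smul_mul_assoc]; exact Submodule.smul_mem _ _ hx

lemma trace_kron_conj_zero {CG : Set (Matrix I I ℂ)} {CH : Set (Matrix J J ℂ)}
    {v : Matrix I I ℂ} {w : Matrix J J ℂ} {A : Matrix (I × J) (I × J) ℂ}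
    (hA : A ∈ tensorSpan CG CH)
    (h : (∀ a ∈ CG, Matrix.trace (v * aᴴ) = 0) ∨ (∀ b ∈ CH, Matrix.trace (w * bᴴ) = 0)) :
    Matrix.trace ((v ⊗ₖ w) * Aᴴ) = 0 := by
  induction hA using Submodule.span_induction with
  | mem a ha =>
    obtain ⟨a1, h1, a2, h2, rfl⟩ := ha
    rw [kron_conjTranspose', ← Matrix.mul_kronecker_mul, Matrix.trace_kronecker]
    rcases h with h | h
    · rw [h a1 h1, zero_mul]
    · rw [h a2 h2, mul_zero]
  | zero => simp
  | add x y _ _ hx hy => rw [conjTranspose_add, mul_add, trace_add, hx, hy, add_zero]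
  | smul c x _ hx => rw [conjTranspose_smul, mul_smul_comm, trace_smul, hx, smul_zero]

end QGAux

theorem strongProduct_isQuantumGraph {n m : ℕ}
    (SG : Submodule ℂ (Matrix (Fin n) (Fin n) ℂ))
    (MG : StarSubalgebra ℂ (Matrix (Fin n) (Fin n) ℂ))
    (SH : Submodule ℂ (Matrix (Fin m) (Fin m) ℂ))
    (MH : StarSubalgebra ℂ (Matrix (Fin m) (Fin m) ℂ))
    (hG : IsQuantumGraph SG (MG : Set (Matrix (Fin n) (Fin n) ℂ)))
    (hH : IsQuantumGraph SH (MH : Set (Matrix (Fin m) (Fin m) ℂ))) :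
    IsQuantumGraph (tensorSpan (SG : Set (Matrix (Fin n) (Fin n) ℂ)) (commutant (MH : Set (Matrix (Fin m) (Fin m) ℂ))) ⊔ tensorSpan (commutant (MG : Set (Matrix (Fin n) (Fin n) ℂ))) (SH : Set (Matrix (Fin m) (Fin m) ℂ)) ⊔ tensorSpan (SG : Set (Matrix (Fin n) (Fin n) ℂ)) (SH : Set (Matrix (Fin m) (Fin m) ℂ))) ((tensorSpan (MG : Set (Matrix (Fin n) (Fin n) ℂ)) (MH : Set (Matrix (Fin m) (Fin m) ℂ)) : Submodule ℂ (Matrix (Fin n × Fin m) (Fin n × Fin m) ℂ)) : Set (Matrix (Fin n × Fin m) (Fin n × Fin m) ℂ)) := by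
  obtain ⟨hG1, hG2, hG3⟩ := hG
  obtain ⟨hH1, hH2, hH3⟩ := hH
  have hMGstar : ∀ A ∈ (MG : Set (Matrix (Fin n) (Fin n) ℂ)), Aᴴ ∈ (MG : Set (Matrix (Fin n) (Fin n) ℂ)) := by
    intro A hA
    have : star A ∈ MG := star_mem (SetLike.mem_coe.mp hA)
    rw [SetLike.mem_coe]
    rwa [Matrix.star_eq_conjTranspose] at this
  have hMHstar : ∀ A ∈ (MH : Set (Matrix (Fin m) (Fin m) ℂ)), Aᴴ ∈ (MH : Set (Matrix (Fin m) (Fin m) ℂ)) := by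
    intro A hA
    have : star A ∈ MH := star_mem (SetLike.mem_coe.mp hA)
    rw [SetLike.mem_coe]
    rwa [Matrix.star_eq_conjTranspose] at this
  have h1G : (1 : Matrix (Fin n) (Fin n) ℂ) ∈ (MG : Set (Matrix (Fin n) (Fin n) ℂ)) := one_mem MG
  have h1H : (1 : Matrix (Fin m) (Fin m) ℂ) ∈ (MH : Set (Matrix (Fin m) (Fin m) ℂ)) := one_mem MH
  set CG := commutant (MG : Set (Matrix (Fin n) (Fin n) ℂ)) with hCGdef
  set CH := commutant (MH : Set (Matrix (Fin m) (Fin m) ℂ)) with hCHdef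
  have hcomm : ∀ A ∈ commutant ((tensorSpan (MG : Set (Matrix (Fin n) (Fin n) ℂ)) (MH : Set (Matrix (Fin m) (Fin m) ℂ)) : Submodule ℂ (Matrix (Fin n × Fin m) (Fin n × Fin m) ℂ)) : Set (Matrix (Fin n × Fin m) (Fin n × Fin m) ℂ)),
      A ∈ tensorSpan CG CH := fun A hA => commutant_tensorSpan_subset _ _ h1G h1H hA
  set T1 : Set (Matrix (Fin n × Fin m) (Fin n × Fin m) ℂ) :=
    {x | ∃ v ∈ (SG : Set (Matrix (Fin n) (Fin n) ℂ)), ∃ w ∈ CH, x = v ⊗ₖ w} with hT1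
  set T2 : Set (Matrix (Fin n × Fin m) (Fin n × Fin m) ℂ) :=
    {x | ∃ v ∈ CG, ∃ w ∈ (SH : Set (Matrix (Fin m) (Fin m) ℂ)), x = v ⊗ₖ w} with hT2
  set T3 : Set (Matrix (Fin n × Fin m) (Fin n × Fin m) ℂ) :=
    {x | ∃ v ∈ (SG : Set (Matrix (Fin n) (Fin n) ℂ)), ∃ w ∈ (SH : Set (Matrix (Fin m) (Fin m) ℂ)), x = v ⊗ₖ w} with hT3
  have hSK : tensorSpan (SG : Set (Matrix (Fin n) (Fin n) ℂ)) CH ⊔ tensorSpan CG (SH : Set (Matrix (Fin m) (Fin m) ℂ)) ⊔ tensorSpan (SG : Set (Matrix (Fin n) (Fin n) ℂ)) (SH : Set (Matrix (Fin m) (Fin m) ℂ))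
      = Submodule.span ℂ (T1 ∪ T2 ∪ T3) := by
    rw [Submodule.span_union, Submodule.span_union]
    rfl
  refine ⟨?_, ?_, ?_⟩
  · -- closed under conjugate transpose
    intro X hX
    rw [hSK] at hX ⊢
    induction hX using Submodule.span_induction with
    | mem x hx =>
      apply Submodule.subset_span
      rcases hx with (⟨v, hv, w, hw, rfl⟩ | ⟨v, hv, w, hw, rfl⟩) | ⟨v, hv, w, hw, rfl⟩
      · rw [kron_conjTranspose']
        exact Or.inl (Or.inl ⟨vᴴ, hG1 v hv, wᴴ, commutant_star' hMHstar hw, rfl⟩)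
      · rw [kron_conjTranspose']
        exact Or.inl (Or.inr ⟨vᴴ, commutant_star' hMGstar hv, wᴴ, hH1 w hw, rfl⟩)
      · rw [kron_conjTranspose']
        exact Or.inr ⟨vᴴ, hG1 v hv, wᴴ, hH1 w hw, rfl⟩
    | zero => rw [conjTranspose_zero]; exact zero_mem _
    | add x y _ _ hx hy => rw [conjTranspose_add]; exact add_mem hx hy
    | smul c x _ hx => rw [conjTranspose_smul]; exact Submodule.smul_mem _ _ hx
  · -- bimodule over the commutant
    intro A hA B hB X hX
    have hA' : A ∈ tensorSpan CG CH := hcomm A hA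
    have hB' : B ∈ tensorSpan CG CH := hcomm B hB
    rw [hSK] at hX ⊢
    induction hX using Submodule.span_induction with
    | mem x hx =>
      rcases hx with (⟨v, hv, w, hw, rfl⟩ | ⟨v, hv, w, hw, rfl⟩) | ⟨v, hv, w, hw, rfl⟩
      · refine Submodule.span_mono (fun y hy => Or.inl (Or.inl hy))
          (mul_tensor_mul_mem (SG : Set (Matrix (Fin n) (Fin n) ℂ)) CH ?_ ?_ hA' hB' hv hw)
        · exact fun a ha b hb v hv => hG2 a ha b hb v hv
        · exact fun a ha b hb w hw => commutant_mul' (commutant_mul' ha hw) hb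
      · refine Submodule.span_mono (fun y hy => Or.inl (Or.inr hy))
          (mul_tensor_mul_mem CG (SH : Set (Matrix (Fin m) (Fin m) ℂ)) ?_ ?_ hA' hB' hv hw)
        · exact fun a ha b hb v hv => commutant_mul' (commutant_mul' ha hv) hb
        · exact fun a ha b hb w hw => hH2 a ha b hb w hw
      · refine Submodule.span_mono (fun y hy => Or.inr hy)
          (mul_tensor_mul_mem (SG : Set (Matrix (Fin n) (Fin n) ℂ)) (SH : Set (Matrix (Fin m) (Fin m) ℂ)) ?_ ?_ hA' hB' hv hw)
        · exact fun a ha b hb v hv => hG2 a ha b hb v hv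
        · exact fun a ha b hb w hw => hH2 a ha b hb w hw
    | zero => rw [mul_zero, zero_mul]; exact zero_mem _
    | add x y _ _ hx hy => rw [mul_add, add_mul]; exact add_mem hx hy
    | smul c x _ hx => rw [mul_smul_comm, smul_mul_assoc]; exact Submodule.smul_mem _ _ hx
  · -- trace orthogonality
    intro X hX A hA
    have hA' : A ∈ tensorSpan CG CH := hcomm A hA
    rw [hSK] at hX
    induction hX using Submodule.span_induction with
    | mem x hx =>
      rcases hx with (⟨v, hv, w, hw, rfl⟩ | ⟨v, hv, w, hw, rfl⟩) | ⟨v, hv, w, hw, rfl⟩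
      · exact trace_kron_conj_zero hA' (Or.inl fun a ha => hG3 v hv a ha)
      · exact trace_kron_conj_zero hA' (Or.inr fun b hb => hH3 w hw b hb)
      · exact trace_kron_conj_zero hA' (Or.inl fun a ha => hG3 v hv a ha)
    | zero => rw [zero_mul, trace_zero]
    | add x y _ _ hx hy => rw [add_mul, trace_add, hx, hy, add_zero]
    | smul c x _ hx => rw [smul_mul_assoc, trace_smul, hx, smul_zero]


end
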